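/- Let R ≥ 1 and N ≥ 2 be natural numbers, let q = ⌈R/(N−1)⌉ and r = R − (q−1)·(N−1) (so 1 ≤ r ≤ N−1). Then the total count (q−1)·N + (r + 1) equals ⌈R·N/(N−1)⌉. (This is the exact number of symbols the leader downloads from a single client with N databases in the proposed scheme: each of the first q−1 full batches costs N downloads, and the last batch of r desired indices costs r+1 downloads.) -/

import Mathlib

/-- Let `R ≥ 1`, `N ≥ 2`, `q = ⌈R/(N−1)⌉` and `r = R − (q−1)·(N−1)`.
Then `(q−1)·N + (r + 1) = ⌈R·N/(N−1)⌉`. -/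
theorem mp_psi_per_client_download_count (R N : ℕ) (hR : 1 ≤ R) (hN : 2 ≤ N)
    (q r : ℤ) (hq : q = ⌈(R : ℚ) / ((N : ℚ) - 1)⌉)
    (hr : r = (R : ℤ) - (q - 1) * ((N : ℤ) - 1)) :
    (q - 1) * N + (r + 1) = ⌈((R : ℚ) * N) / ((N : ℚ) - 1)⌉ := by
  have hN1 : ((N : ℚ) - 1) ≠ 0 := by
    have : (2 : ℚ) ≤ (N : ℚ) := by exact_mod_cast hN
    linarith
  have key : ((R : ℚ) * N) / ((N : ℚ) - 1) = (R : ℚ) / ((N : ℚ) - 1) + (R : ℕ) := by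
    field_simp; ring
  rw [key, Int.ceil_add_natCast, ← hq]
  subst hr
  ring
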